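/- Let H be a graded connected Hopf algebra over ℂ, φ ∈ G_A a local character, and m, n ∈ ℤ with −n+2m ≥ 0. Suppose g_±(s) are pointwise differentiable curves in G_A with g_±(0) = ε furnishing the Birkhoff factorization exp(−2sλ^{−n+2m}·tildeβ_φ) = g_-(s)^{-1}⋆g_+(s). Then the Lax pair flow L(s) = Ad(g_+(s))(tildeβ_φ) is constant: L(s) = tildeβ_φ for all s; in particular the beta character tildeβ_φ, and hence the β-function, is a fixed point of this Lax pair flow. -/

import Mathlib

open scoped TensorProduct

set_option synthInstance.maxHeartbeats 1000000
set_option maxHeartbeats 1600000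
set_option linter.unnecessarySeqFocus false

noncomputable section

/-- The algebra `A = ℂ((λ))` of formal Laurent series with finite pole part. -/
abbrev LS := LaurentSeries ℂ

/-- `ℂ`-scalars commute with multiplication of Laurent series. -/
instance : SMulCommClass ℂ LS LS := by
  constructor
  intro c a b
  show c • (a * b) = a * (c • b)
  rw [← HahnSeries.single_zero_mul_eq_smul, ← HahnSeries.single_zero_mul_eq_smul]
  ring

/-- Scalar tower for `ℂ`-scalars and Laurent series. -/
instance : IsScalarTower ℂ LS LS := by
  constructor
  intro c a b
  show (c • a) * b = c • (a * b)
  rw [← HahnSeries.single_zero_mul_eq_smul, ← HahnSeries.single_zero_mul_eq_smul]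
  ring

/-- `A₊ = ℂ[[λ]]`: the holomorphic part. -/
def Aplus (f : LS) : Prop := ∀ n : ℤ, n < 0 → f.coeff n = 0

/-- `A₋ = λ⁻¹ℂ[λ⁻¹]`: the polar part. -/
def Aminus (f : LS) : Prop := ∀ n : ℤ, 0 ≤ n → f.coeff n = 0

/-- The formal variable `λ`. -/
def lam : LS := HahnSeries.single (1 : ℤ) (1 : ℂ)

/-- `λ^k` for `k : ℤ`. -/
def lamZ (k : ℤ) : LS := HahnSeries.single k (1 : ℂ)

/-- `e^{cλ} = Σ_k c^k λ^k / k!` as a Laurent series. -/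
def expL (c : ℂ) : LS :=
  HahnSeries.ofPowerSeries ℤ ℂ (PowerSeries.mk fun k => c ^ k / (k.factorial : ℂ))

section Hopf

variable {H : Type} [Ring H] [HopfAlgebra ℂ H]

/-- Convolution product of linear maps from a Hopf algebra to `A`. -/
def conv (f g : H →ₗ[ℂ] LS) : H →ₗ[ℂ] LS :=
  LinearMap.mul' ℂ LS ∘ₗ TensorProduct.map f g ∘ₗ Coalgebra.comul

/-- The unit `ε` of the convolution algebra. -/
def epsA : H →ₗ[ℂ] LS := LinearMap.toSpanSingleton ℂ LS 1 ∘ₗ Coalgebra.counit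

/-- Characters: algebra morphisms `H → A` sending `1` to `1`. -/
def IsCharacter (φ : H →ₗ[ℂ] LS) : Prop :=
  φ 1 = 1 ∧ ∀ x y : H, φ (x * y) = φ x * φ y

/-- The group inverse of a character: `φ⁻¹ = φ ∘ S`. -/
def charInv (φ : H →ₗ[ℂ] LS) : H →ₗ[ℂ] LS := φ ∘ₗ HopfAlgebra.antipode (R := ℂ)

/-- Infinitesimal characters: `Z(xy) = Z(x)ε(y) + ε(x)Z(y)`. -/
def IsInfChar (Z : H →ₗ[ℂ] LS) : Prop :=
  ∀ x y : H, Z (x * y) = Z x * epsA y + epsA x * Z y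

/-- The Lie bracket `[Z,Z'] = Z⋆Z' − Z'⋆Z` on infinitesimal characters. -/
def lieBr (Z W : H →ₗ[ℂ] LS) : H →ₗ[ℂ] LS := conv Z W - conv W Z

/-- The adjoint action `Ad(g)L = g⋆L⋆g⁻¹`. -/
def Adc (g L : H →ₗ[ℂ] LS) : H →ₗ[ℂ] LS := conv g (conv L (charInv g))

/-- Convolution powers `Z^{⋆k}`. -/
def convPow (Z : H →ₗ[ℂ] LS) : ℕ → (H →ₗ[ℂ] LS)
  | 0 => epsA
  | k + 1 => conv Z (convPow Z k)

/-- `E = exp(Z)`, the convolution exponential: for each `x ∈ H` the series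
`Σ_k Z^{⋆k}(x)/k!` stabilizes (a finite sum by connectedness) with value `E(x)`. -/
def IsConvExp (Z E : H →ₗ[ℂ] LS) : Prop :=
  ∀ x : H, ∃ N : ℕ, ∀ M : ℕ, N ≤ M →
    E x = ∑ k ∈ Finset.range M, ((k.factorial : ℂ))⁻¹ • convPow Z k x

/- ℂ-valued (scalar) versions, for `β`-functions. -/

/-- Convolution product of ℂ-valued linear maps on a Hopf algebra. -/
def convC (f g : H →ₗ[ℂ] ℂ) : H →ₗ[ℂ] ℂ :=
  LinearMap.mul' ℂ ℂ ∘ₗ TensorProduct.map f g ∘ₗ Coalgebra.comul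

/-- ℂ-valued characters. -/
def IsCharacterC (φ : H →ₗ[ℂ] ℂ) : Prop :=
  φ 1 = 1 ∧ ∀ x y : H, φ (x * y) = φ x * φ y

/-- The group inverse of a ℂ-valued character. -/
def charInvC (φ : H →ₗ[ℂ] ℂ) : H →ₗ[ℂ] ℂ := φ ∘ₗ HopfAlgebra.antipode (R := ℂ)

/-- ℂ-valued infinitesimal characters. -/
def IsInfCharC (Z : H →ₗ[ℂ] ℂ) : Prop :=
  ∀ x y : H, Z (x * y) = Z x * Coalgebra.counit y + Coalgebra.counit x * Z y

end Hopf

section Graded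

variable {H : Type} [Ring H] [HopfAlgebra ℂ H]
variable (𝒜 : ℕ → Submodule ℂ H) [GradedAlgebra 𝒜]

/-- Connectedness: `H₀ = ℂ·1`. -/
def IsConnectedGrading : Prop := 𝒜 0 = Submodule.span ℂ {(1 : H)}

/-- The coproduct is grading-preserving: `Δ(H_n) ⊆ Σ_{i+j=n} H_i ⊗ H_j`. -/
def ComulGraded : Prop :=
  ∀ n : ℕ, ∀ x ∈ 𝒜 n, Coalgebra.comul (R := ℂ) x ∈
    ⨆ p : {p : ℕ × ℕ // p.1 + p.2 = n},
      LinearMap.range (TensorProduct.map ((𝒜 p.1.1).subtype) ((𝒜 p.1.2).subtype))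

/-- The counit is grading-preserving: it vanishes in positive degrees. -/
def CounitGraded : Prop := ∀ n : ℕ, 0 < n → ∀ x ∈ 𝒜 n, Coalgebra.counit (R := ℂ) x = 0

/-- The antipode is grading-preserving. -/
def AntipodeGraded : Prop := ∀ n : ℕ, ∀ x ∈ 𝒜 n, HopfAlgebra.antipode (R := ℂ) x ∈ 𝒜 n

/-- The grading biderivation `Y(x) = n·x` for `x ∈ H_n`. -/
def Ymap : H →ₗ[ℂ] H :=
  (DFinsupp.lsum ℕ fun n : ℕ => ((n : ℂ) • (𝒜 n).subtype)) ∘ₗ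
    (DirectSum.decomposeLinearEquiv 𝒜).toLinearMap

/-- `φ^t`, defined by `φ^t(x) = e^{tλn}·φ(x)` for homogeneous `x` of degree `n`. -/
def charScale (t : ℂ) (φ : H →ₗ[ℂ] LS) : H →ₗ[ℂ] LS :=
  (DFinsupp.lsum ℕ fun n : ℕ => (expL (t * (n : ℂ)) • (φ ∘ₗ (𝒜 n).subtype))) ∘ₗ
    (DirectSum.decomposeLinearEquiv 𝒜).toLinearMap

/-- `R̃(φ) = φ^{-1} ⋆ (φ ∘ Y)`. -/
def Rtilde (φ : H →ₗ[ℂ] LS) : H →ₗ[ℂ] LS := conv (charInv φ) (φ ∘ₗ Ymap 𝒜)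

/-- `(φm, φp)` is the Birkhoff decomposition of `φ`: `φ = φm^{-1} ⋆ φp`, i.e. `φm ⋆ φ = φp`,
with `φp` holomorphic and `φm − ε` a pure pole part. -/
def IsBirkhoff (φ φm φp : H →ₗ[ℂ] LS) : Prop :=
  IsCharacter φm ∧ IsCharacter φp ∧ (∀ x, Aplus (φp x)) ∧
    (∀ x, Aminus (φm x - epsA x)) ∧ conv φm φ = φp

/-- A character is local if the negative Birkhoff part of `φ^t` is independent of `t`. -/
def IsLocal (φ : H →ₗ[ℂ] LS) : Prop :=
  IsCharacter φ ∧ ∃ φm : H →ₗ[ℂ] LS, ∀ t : ℂ, ∃ φp, IsBirkhoff (charScale 𝒜 t φ) φm φp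

/-- `B = tildeβ_φ`:  `B(x) = (d/dt)|_{t=0} (φ^{-1} ⋆ φ^t)(x)`, coefficientwise. -/
def HasTildeBeta (φ B : H →ₗ[ℂ] LS) : Prop :=
  ∀ (x : H) (n : ℤ),
    HasDerivAt (fun t : ℂ => ((conv (charInv φ) (charScale 𝒜 t φ)) x).coeff n)
      ((B x).coeff n) 0

/-- The `β`-function `β_φ = −(Res φ₋) ∘ Y` of a local character whose negative
Birkhoff part is `φm`. -/
def betaFn (φm : H →ₗ[ℂ] LS) : H → ℂ := fun x => -((φm (Ymap 𝒜 x)).coeff (-1))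

end Graded

section Curves

variable {H : Type} [Ring H] [HopfAlgebra ℂ H]

/-- Pointwise (coefficientwise) derivative of a curve of maps `H → A`. -/
def HasDerivAtF (F : ℝ → (H →ₗ[ℂ] LS)) (F' : H →ₗ[ℂ] LS) (t : ℝ) : Prop :=
  ∀ (x : H) (n : ℤ), HasDerivAt (fun s : ℝ => ((F s) x).coeff n) ((F' x).coeff n) t

/-- Pointwise differentiability of a curve of maps `H → A`. -/
def PointwiseDifferentiable (F : ℝ → (H →ₗ[ℂ] LS)) : Prop :=
  ∀ (x : H) (n : ℤ), Differentiable ℝ (fun s : ℝ => ((F s) x).coeff n)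

end Curves

/-- The operator `R = P₊ − P₋` on Laurent series. -/
def Rop : LS →ₗ[ℂ] LS where
  toFun f :=
    { coeff := fun n => if n < 0 then -f.coeff n else f.coeff n
      isPWO_support' := f.isPWO_support'.mono (by
        intro n hn
        simp only [Function.mem_support] at hn ⊢
        by_cases h : n < 0 <;> simp_all) }
  map_add' f g := by
    ext n
    by_cases h : n < 0 <;> simp [h] <;> ring
  map_smul' c f := by
    ext n
    by_cases h : n < 0 <;> simp [h]



section AuxLemmas

open Coalgebra

variable {H : Type} [Ring H] [HopfAlgebra ℂ H]

lemma epsA_apply (x : H) : epsA (H := H) x = Coalgebra.counit (R := ℂ) x • (1 : LS) := rfl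

lemma charInv_apply (f : H →ₗ[ℂ] LS) (x : H) :
    charInv f x = f (HopfAlgebra.antipode (R := ℂ) x) := rfl

lemma conv_repr (f g : H →ₗ[ℂ] LS) (x : H) {ι : Type*} (r : Coalgebra.Repr ℂ x ι) :
    conv f g x = ∑ i ∈ r.index, f (r.left i) * g (r.right i) := by
  have h0 : conv f g x
      = LinearMap.mul' ℂ LS (TensorProduct.map f g (Coalgebra.comul (R := ℂ) x)) := rfl
  rw [h0, ← r.eq, map_sum, map_sum]
  simp [TensorProduct.map_tmul, LinearMap.mul'_apply]

lemma conv_assoc (f g h : H →ₗ[ℂ] LS) : conv (conv f g) h = conv f (conv g h) := by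
  have key : ∀ u : H ⊗[ℂ] (H ⊗[ℂ] H),
      LinearMap.mul' ℂ LS (TensorProduct.map (LinearMap.mul' ℂ LS ∘ₗ TensorProduct.map f g) h
        ((TensorProduct.assoc ℂ H H H).symm u)) =
      LinearMap.mul' ℂ LS (TensorProduct.map f
        (LinearMap.mul' ℂ LS ∘ₗ TensorProduct.map g h) u) := by
    intro u
    induction u using TensorProduct.induction_on with
    | zero => simp
    | tmul a v =>
      induction v using TensorProduct.induction_on with
      | zero => simp [TensorProduct.tmul_zero]
      | tmul b c => simp [mul_assoc]
      | add v w hv hw => simp only [TensorProduct.tmul_add, map_add, hv, hw]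
    | add u v hu hv => simp only [map_add, hu, hv]
  have e1 : TensorProduct.map (conv f g) h =
      (TensorProduct.map (LinearMap.mul' ℂ LS ∘ₗ TensorProduct.map f g) h).comp
        ((Coalgebra.comul (R := ℂ) (A := H)).rTensor H) := by
    rw [LinearMap.rTensor, ← TensorProduct.map_comp, LinearMap.comp_id]
    rfl
  have e2 : TensorProduct.map f (conv g h) =
      (TensorProduct.map f (LinearMap.mul' ℂ LS ∘ₗ TensorProduct.map g h)).comp
        ((Coalgebra.comul (R := ℂ) (A := H)).lTensor H) := by
    rw [LinearMap.lTensor, ← TensorProduct.map_comp, LinearMap.comp_id]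
    rfl
  apply LinearMap.ext; intro x
  have l1 : conv (conv f g) h x
      = LinearMap.mul' ℂ LS (TensorProduct.map (conv f g) h (Coalgebra.comul (R := ℂ) x)) := rfl
  have l2 : conv f (conv g h) x
      = LinearMap.mul' ℂ LS (TensorProduct.map f (conv g h) (Coalgebra.comul (R := ℂ) x)) := rfl
  rw [l1, l2, e1, e2]
  simp only [LinearMap.comp_apply]
  rw [← Coalgebra.coassoc_symm_apply (R := ℂ) x]
  exact key _

lemma conv_epsA_left (f : H →ₗ[ℂ] LS) : conv epsA f = f := by
  apply LinearMap.ext; intro x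
  have r := Coalgebra.Repr.arbitrary ℂ x
  rw [conv_repr _ _ x r]
  have h4 := congrArg (TensorProduct.lid ℂ H) (Coalgebra.sum_counit_tmul_eq (R := ℂ) r)
  simp only [map_sum, TensorProduct.lid_tmul, one_smul] at h4
  calc ∑ i ∈ r.index, epsA (r.left i) * f (r.right i)
      = ∑ i ∈ r.index, Coalgebra.counit (R := ℂ) (r.left i) • f (r.right i) := by
        refine Finset.sum_congr rfl fun i _ => ?_
        rw [epsA_apply, smul_mul_assoc, one_mul]
    _ = f (∑ i ∈ r.index, Coalgebra.counit (R := ℂ) (r.left i) • r.right i) := by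
        rw [map_sum]
        exact Finset.sum_congr rfl fun i _ => (map_smul f _ _).symm
    _ = f x := by rw [h4]

lemma conv_epsA_right (f : H →ₗ[ℂ] LS) : conv f epsA = f := by
  apply LinearMap.ext; intro x
  have r := Coalgebra.Repr.arbitrary ℂ x
  rw [conv_repr _ _ x r]
  have h4 := congrArg (TensorProduct.rid ℂ H) (Coalgebra.sum_tmul_counit_eq (R := ℂ) r)
  simp only [map_sum, TensorProduct.rid_tmul, one_smul] at h4
  calc ∑ i ∈ r.index, f (r.left i) * epsA (r.right i)
      = ∑ i ∈ r.index, Coalgebra.counit (R := ℂ) (r.right i) • f (r.left i) := by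
        refine Finset.sum_congr rfl fun i _ => ?_
        rw [epsA_apply, mul_smul_comm, mul_one]
    _ = f (∑ i ∈ r.index, Coalgebra.counit (R := ℂ) (r.right i) • r.left i) := by
        rw [map_sum]
        exact Finset.sum_congr rfl fun i _ => (map_smul f _ _).symm
    _ = f x := by rw [h4]

lemma conv_charInv_right {χ : H →ₗ[ℂ] LS} (hχ : IsCharacter χ) : conv χ (charInv χ) = epsA := by
  apply LinearMap.ext; intro x
  have r := Coalgebra.Repr.arbitrary ℂ x
  rw [conv_repr _ _ x r]
  calc ∑ i ∈ r.index, χ (r.left i) * charInv χ (r.right i)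
      = χ (∑ i ∈ r.index, r.left i * HopfAlgebra.antipode (R := ℂ) (r.right i)) := by
        rw [map_sum]
        exact Finset.sum_congr rfl fun i _ => by rw [charInv_apply, ← hχ.2]
    _ = χ (Coalgebra.counit (R := ℂ) x • 1) := by rw [HopfAlgebra.sum_mul_antipode_eq_smul r]
    _ = epsA x := by rw [map_smul, hχ.1, epsA_apply]

lemma conv_charInv_left {χ : H →ₗ[ℂ] LS} (hχ : IsCharacter χ) : conv (charInv χ) χ = epsA := by
  apply LinearMap.ext; intro x
  have r := Coalgebra.Repr.arbitrary ℂ x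
  rw [conv_repr _ _ x r]
  calc ∑ i ∈ r.index, charInv χ (r.left i) * χ (r.right i)
      = χ (∑ i ∈ r.index, HopfAlgebra.antipode (R := ℂ) (r.left i) * r.right i) := by
        rw [map_sum]
        exact Finset.sum_congr rfl fun i _ => by rw [charInv_apply, ← hχ.2]
    _ = χ (Coalgebra.counit (R := ℂ) x • 1) := by rw [HopfAlgebra.sum_antipode_mul_eq_smul r]
    _ = epsA x := by rw [map_smul, hχ.1, epsA_apply]

lemma counit_antipode_eq (x : H) :
    Coalgebra.counit (R := ℂ) (HopfAlgebra.antipode (R := ℂ) x)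
      = Coalgebra.counit (R := ℂ) x := by
  have r := Coalgebra.Repr.arbitrary ℂ x
  have h1 := HopfAlgebra.sum_antipode_mul_eq_smul (R := ℂ) r
  have h2 := congrArg (Coalgebra.counit (R := ℂ)) h1
  rw [map_sum, map_smul] at h2
  simp only [Bialgebra.counit_mul, Bialgebra.counit_one, smul_eq_mul, mul_one] at h2
  have h3 := congrArg (TensorProduct.rid ℂ H) (Coalgebra.sum_tmul_counit_eq (R := ℂ) r)
  simp only [map_sum, TensorProduct.rid_tmul, one_smul] at h3
  calc Coalgebra.counit (R := ℂ) (HopfAlgebra.antipode (R := ℂ) x)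
      = Coalgebra.counit (R := ℂ) (HopfAlgebra.antipode (R := ℂ)
          (∑ i ∈ r.index, Coalgebra.counit (R := ℂ) (r.right i) • r.left i)) := by rw [h3]
    _ = ∑ i ∈ r.index, Coalgebra.counit (R := ℂ)
          (HopfAlgebra.antipode (R := ℂ) (r.left i)) * Coalgebra.counit (R := ℂ) (r.right i) := by
        rw [map_sum, map_sum]
        refine Finset.sum_congr rfl fun i _ => ?_
        rw [map_smul, map_smul, smul_eq_mul, mul_comm]
    _ = Coalgebra.counit (R := ℂ) x := h2

lemma epsA_antipode (x : H) : epsA (HopfAlgebra.antipode (R := ℂ) x) = epsA (H := H) x := by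
  rw [epsA_apply, epsA_apply, counit_antipode_eq]

lemma Aplus_zero : Aplus (0 : LS) := fun _ _ => rfl

lemma Aplus_add {a b : LS} (ha : Aplus a) (hb : Aplus b) : Aplus (a + b) := fun n hn => by
  rw [HahnSeries.coeff_add, ha n hn, hb n hn, add_zero]

lemma Aplus_smul {c : ℂ} {a : LS} (ha : Aplus a) : Aplus (c • a) := fun n hn => by
  rw [HahnSeries.coeff_smul, ha n hn, smul_zero]

lemma Aplus_mul {a b : LS} (ha : Aplus a) (hb : Aplus b) : Aplus (a * b) := by
  intro n hn
  by_contra hc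
  obtain ⟨i, hi, j, hj, hij⟩ :=
    HahnSeries.support_mul_subset (x := a) (y := b) (Function.mem_support.2 hc)
  have hi0 : 0 ≤ i := le_of_not_gt fun h => hi (ha i h)
  have hj0 : 0 ≤ j := le_of_not_gt fun h => hj (hb j h)
  have hn' : (0 : ℤ) ≤ n := hij ▸ add_nonneg hi0 hj0
  omega

lemma Aplus_one : Aplus (1 : LS) := fun n hn => by
  rw [HahnSeries.coeff_one, if_neg (by omega)]

lemma Aplus_epsA (x : H) : Aplus (epsA (H := H) x) := by
  rw [epsA_apply]; exact Aplus_smul Aplus_one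

lemma Aplus_lamZ {k : ℤ} (hk : 0 ≤ k) : Aplus (lamZ k) := fun n hn => by
  rw [lamZ, HahnSeries.coeff_single, if_neg (by omega)]

lemma Aplus_sum {ι : Type*} {s : Finset ι} {f : ι → LS} (h : ∀ i ∈ s, Aplus (f i)) :
    Aplus (∑ i ∈ s, f i) :=
  Finset.sum_induction f Aplus (fun _ _ => Aplus_add) Aplus_zero h

lemma Aplus_conv {f g : H →ₗ[ℂ] LS} (hf : ∀ x, Aplus (f x)) (hg : ∀ x, Aplus (g x)) (x : H) :
    Aplus (conv f g x) := by
  rw [conv_repr _ _ x (Coalgebra.Repr.arbitrary ℂ x)]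
  exact Aplus_sum fun i _ => Aplus_mul (hf _) (hg _)

lemma eq_epsA_of_plus_minus {ψ : H →ₗ[ℂ] LS} (hp : ∀ x, Aplus (ψ x))
    (hm : ∀ x, Aminus (ψ x - epsA x)) : ψ = epsA := by
  apply LinearMap.ext; intro x
  apply HahnSeries.coeff_injective
  funext nn
  rcases lt_or_ge nn 0 with h | h
  · rw [hp x nn h, Aplus_epsA x nn h]
  · have h2 := hm x nn h
    rw [HahnSeries.coeff_sub] at h2
    exact sub_eq_zero.mp h2

lemma expL_zero : expL 0 = 1 := by
  unfold expL
  have h : (PowerSeries.mk fun k => (0 : ℂ) ^ k / (k.factorial : ℂ)) = 1 := by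
    ext k
    rw [PowerSeries.coeff_mk, PowerSeries.coeff_one]
    cases k with
    | zero => simp
    | succ k => simp
  rw [h, map_one]

lemma conv_smulC_right (f g : H →ₗ[ℂ] LS) (c : ℂ) : conv f (c • g) = c • conv f g := by
  apply LinearMap.ext; intro x
  have r := Coalgebra.Repr.arbitrary ℂ x
  rw [LinearMap.smul_apply, conv_repr _ _ x r, conv_repr _ _ x r, Finset.smul_sum]
  exact Finset.sum_congr rfl fun i _ => by rw [LinearMap.smul_apply, mul_smul_comm]

lemma conv_smulC_left (f g : H →ₗ[ℂ] LS) (c : ℂ) : conv (c • f) g = c • conv f g := by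
  apply LinearMap.ext; intro x
  have r := Coalgebra.Repr.arbitrary ℂ x
  rw [LinearMap.smul_apply, conv_repr _ _ x r, conv_repr _ _ x r, Finset.smul_sum]
  exact Finset.sum_congr rfl fun i _ => by rw [LinearMap.smul_apply, smul_mul_assoc]

lemma conv_smulLS_right (f g : H →ₗ[ℂ] LS) (a : LS) : conv f (a • g) = a • conv f g := by
  apply LinearMap.ext; intro x
  have r := Coalgebra.Repr.arbitrary ℂ x
  rw [LinearMap.smul_apply, conv_repr _ _ x r, conv_repr _ _ x r, smul_eq_mul, Finset.mul_sum]
  exact Finset.sum_congr rfl fun i _ => by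
    rw [LinearMap.smul_apply, smul_eq_mul, mul_left_comm]

lemma conv_smulLS_left (f g : H →ₗ[ℂ] LS) (a : LS) : conv (a • f) g = a • conv f g := by
  apply LinearMap.ext; intro x
  have r := Coalgebra.Repr.arbitrary ℂ x
  rw [LinearMap.smul_apply, conv_repr _ _ x r, conv_repr _ _ x r, smul_eq_mul, Finset.mul_sum]
  exact Finset.sum_congr rfl fun i _ => by
    rw [LinearMap.smul_apply, smul_eq_mul, mul_assoc]

lemma Aplus_convPow {C : H →ₗ[ℂ] LS} (hC : ∀ x, Aplus (C x)) :
    ∀ k x, Aplus (convPow C k x) := by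
  intro k
  induction k with
  | zero => exact fun x => Aplus_epsA x
  | succ k ih => exact fun x => Aplus_conv hC ih x

lemma Aplus_of_isConvExp {C E : H →ₗ[ℂ] LS} (hC : ∀ x, Aplus (C x)) (hE : IsConvExp C E) :
    ∀ x, Aplus (E x) := by
  intro x
  obtain ⟨N, hN⟩ := hE x
  rw [hN N le_rfl]
  exact Aplus_sum fun k _ => Aplus_smul (Aplus_convPow hC k x)

lemma conv_comm_of_exp {B E C : H →ₗ[ℂ] LS}
    (hcomm : ∀ k, conv B (convPow C k) = conv (convPow C k) B)
    (hE : IsConvExp C E) : conv B E = conv E B := by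
  classical
  apply LinearMap.ext; intro x
  have r := Coalgebra.Repr.arbitrary ℂ x
  set M := r.index.sup (fun i => max (hE (r.left i)).choose (hE (r.right i)).choose) with hM
  have hub : ∀ i ∈ r.index,
      max (hE (r.left i)).choose (hE (r.right i)).choose ≤ M := fun i hi =>
    Finset.le_sup (f := fun i => max (hE (r.left i)).choose (hE (r.right i)).choose) hi
  have hr : ∀ i ∈ r.index, E (r.right i)
      = ∑ k ∈ Finset.range M, ((k.factorial : ℂ))⁻¹ • convPow C k (r.right i) := fun i hi =>
    (hE (r.right i)).choose_spec M (le_trans (le_max_right _ _) (hub i hi))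
  have hl : ∀ i ∈ r.index, E (r.left i)
      = ∑ k ∈ Finset.range M, ((k.factorial : ℂ))⁻¹ • convPow C k (r.left i) := fun i hi =>
    (hE (r.left i)).choose_spec M (le_trans (le_max_left _ _) (hub i hi))
  calc conv B E x = ∑ i ∈ r.index, B (r.left i) * E (r.right i) := conv_repr _ _ x r
    _ = ∑ i ∈ r.index, ∑ k ∈ Finset.range M,
          ((k.factorial : ℂ))⁻¹ • (B (r.left i) * convPow C k (r.right i)) := by
        refine Finset.sum_congr rfl fun i hi => ?_
        rw [hr i hi, Finset.mul_sum]
        exact Finset.sum_congr rfl fun k _ => (mul_smul_comm _ _ _)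
    _ = ∑ k ∈ Finset.range M, ((k.factorial : ℂ))⁻¹ • (conv B (convPow C k) x) := by
        rw [Finset.sum_comm]
        refine Finset.sum_congr rfl fun k _ => ?_
        rw [conv_repr _ _ x r, Finset.smul_sum]
    _ = ∑ k ∈ Finset.range M, ((k.factorial : ℂ))⁻¹ • (conv (convPow C k) B x) := by
        simp_rw [hcomm]
    _ = ∑ i ∈ r.index, ∑ k ∈ Finset.range M,
          ((k.factorial : ℂ))⁻¹ • (convPow C k (r.left i) * B (r.right i)) := by
        rw [Finset.sum_comm]
        refine Finset.sum_congr rfl fun k _ => ?_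
        rw [conv_repr _ _ x r, Finset.smul_sum]
    _ = ∑ i ∈ r.index, E (r.left i) * B (r.right i) := by
        refine Finset.sum_congr rfl fun i hi => ?_
        rw [hl i hi, Finset.sum_mul]
        exact Finset.sum_congr rfl fun k _ => (smul_mul_assoc _ _ _).symm
    _ = conv E B x := (conv_repr _ _ x r).symm

end AuxLemmas

section ScaleLemma

variable {H : Type} [Ring H] [HopfAlgebra ℂ H]

lemma charScale_zero (𝒜 : ℕ → Submodule ℂ H) [GradedAlgebra 𝒜] (φ : H →ₗ[ℂ] LS) :
    charScale 𝒜 0 φ = φ := by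
  classical
  apply LinearMap.ext; intro x
  have h0 : charScale 𝒜 0 φ x
      = (DFinsupp.lsum ℕ fun n : ℕ => (expL ((0 : ℂ) * (n : ℂ)) • (φ ∘ₗ (𝒜 n).subtype)))
          (DirectSum.decompose 𝒜 x) := rfl
  rw [h0]
  have he : (fun n : ℕ => (expL ((0 : ℂ) * (n : ℂ)) • (φ ∘ₗ (𝒜 n).subtype)))
      = fun n : ℕ => φ ∘ₗ (𝒜 n).subtype := by
    funext n; rw [zero_mul, expL_zero, one_smul]
  rw [he, DFinsupp.lsum_apply_apply, DFinsupp.sumAddHom_apply, DFinsupp.sum]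
  have : ∑ i ∈ (DirectSum.decompose 𝒜 x).support,
      (φ ∘ₗ (𝒜 i).subtype).toAddMonoidHom ((DirectSum.decompose 𝒜 x) i)
      = φ (∑ i ∈ (DirectSum.decompose 𝒜 x).support, ((DirectSum.decompose 𝒜 x) i : H)) := by
    rw [map_sum]; rfl
  rw [this, DirectSum.sum_support_decompose]

end ScaleLemma

/-- **Theorem.** Let `φ` be a local character of a graded connected Hopf
algebra, with beta character `tildeβ_φ = B`, and let `−n+2m ≥ 0`.  If `g_±(s)`
are pointwise differentiable curves with `g_±(0) = ε` furnishing the Birkhoff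
factorization `exp(−2sλ^{−n+2m}·tildeβ_φ) = g₋(s)⁻¹ ⋆ g₊(s)`, then the Lax
pair flow `L(s) = Ad(g₊(s))(tildeβ_φ)` is constant: `L(s) = tildeβ_φ` for all
`s`.  In particular the beta character, hence the `β`-function, is a fixed
point of this Lax pair flow. -/
theorem tildeBeta_fixed_point
    {H : Type} [Ring H] [HopfAlgebra ℂ H]
    (𝒜 : ℕ → Submodule ℂ H) [GradedAlgebra 𝒜]
    (hconn : IsConnectedGrading 𝒜) (hΔ : ComulGraded 𝒜)
    (hcounit : CounitGraded 𝒜) (hS : AntipodeGraded 𝒜)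
    (m n : ℤ) (hmn : 0 ≤ -n + 2 * m)
    (φ B : H →ₗ[ℂ] LS) (hloc : IsLocal 𝒜 φ) (hB : HasTildeBeta 𝒜 φ B)
    (gm gp : ℝ → (H →ₗ[ℂ] LS))
    (hgmchar : ∀ s, IsCharacter (gm s)) (hgpchar : ∀ s, IsCharacter (gp s))
    (hgm0 : gm 0 = epsA) (hgp0 : gp 0 = epsA)
    (hgpplus : ∀ s x, Aplus (gp s x))
    (hgmminus : ∀ s x, Aminus (gm s x - epsA x))
    (hdm : PointwiseDifferentiable gm) (hdp : PointwiseDifferentiable gp)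
    (hfact : ∀ s : ℝ,
      IsConvExp ((-(2 * (s : ℂ))) • (lamZ (-n + 2 * m) • B))
        (conv (charInv (gm s)) (gp s))) :
    ∀ s : ℝ, Adc (gp s) B = B := by
  -- Step A : the beta character takes values in `A₊`.
  have hBplus : ∀ x, Aplus (B x) := by
    obtain ⟨hφchar, φm, hφm⟩ := hloc
    obtain ⟨φp0, hb0⟩ := hφm 0
    rw [charScale_zero] at hb0
    obtain ⟨hφmchar, hφp0char, hφp0plus, hφmminus, hfac0⟩ := hb0
    have h1 : conv (conv (charInv φp0) φm) φ = epsA := by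
      rw [conv_assoc, hfac0, conv_charInv_left hφp0char]
    have h2 : charInv φ = conv (charInv φp0) φm := by
      calc charInv φ = conv epsA (charInv φ) := (conv_epsA_left _).symm
        _ = conv (conv (conv (charInv φp0) φm) φ) (charInv φ) := by rw [h1]
        _ = conv (conv (charInv φp0) φm) (conv φ (charInv φ)) := conv_assoc _ _ _
        _ = conv (conv (charInv φp0) φm) epsA := by rw [conv_charInv_right hφchar]
        _ = conv (charInv φp0) φm := conv_epsA_right _
    intro x nn hnn
    have hzero : (fun t : ℂ => ((conv (charInv φ) (charScale 𝒜 t φ)) x).coeff nn)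
        = fun _ => (0 : ℂ) := by
      funext t
      obtain ⟨φpt, hbt⟩ := hφm t
      have hfac : conv φm (charScale 𝒜 t φ) = φpt := hbt.2.2.2.2
      have h3 : conv (charInv φ) (charScale 𝒜 t φ) = conv (charInv φp0) φpt := by
        rw [h2, conv_assoc, hfac]
      rw [h3]
      exact Aplus_conv (fun y => hφp0plus (HopfAlgebra.antipode (R := ℂ) y))
        hbt.2.2.1 x nn hnn
    have hconst : HasDerivAt
        (fun t : ℂ => ((conv (charInv φ) (charScale 𝒜 t φ)) x).coeff nn) 0 0 := by
      rw [hzero]; exact hasDerivAt_const _ _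
    exact (hB x nn).unique hconst
  intro s
  have hgp := hgpchar s
  have hgm := hgmchar s
  -- Step B : the exponent takes values in `A₊`.
  have hCplus : ∀ x, Aplus (((-(2 * (s : ℂ))) • (lamZ (-n + 2 * m) • B)) x) := by
    intro x
    rw [LinearMap.smul_apply, LinearMap.smul_apply, smul_eq_mul]
    exact Aplus_smul (Aplus_mul (Aplus_lamZ hmn) (hBplus x))
  have hEplus : ∀ x, Aplus ((conv (charInv (gm s)) (gp s)) x) :=
    Aplus_of_isConvExp hCplus (hfact s)
  -- Step C : triviality of the negative part, `charInv (gm s) = ε`, hence `gp s = E`.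
  have h4 : conv (conv (charInv (gm s)) (gp s)) (charInv (gp s)) = charInv (gm s) := by
    rw [conv_assoc, conv_charInv_right hgp, conv_epsA_right]
  have hinvplus : ∀ x, Aplus (charInv (gm s) x) := by
    intro x
    rw [← h4]
    exact Aplus_conv hEplus (fun y => hgpplus s (HopfAlgebra.antipode (R := ℂ) y)) x
  have hinvminus : ∀ x, Aminus (charInv (gm s) x - epsA x) := by
    intro x
    have h5 : charInv (gm s) x - epsA x
        = gm s (HopfAlgebra.antipode (R := ℂ) x) - epsA (HopfAlgebra.antipode (R := ℂ) x) := by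
      rw [charInv_apply, epsA_antipode]
    rw [h5]
    exact hgmminus s _
  have h6 : charInv (gm s) = epsA := eq_epsA_of_plus_minus hinvplus hinvminus
  have hEgp : conv (charInv (gm s)) (gp s) = gp s := by rw [h6, conv_epsA_left]
  -- Step D : `B` commutes with the exponential, i.e. with `gp s`.
  have hBC : conv B ((-(2 * (s : ℂ))) • (lamZ (-n + 2 * m) • B))
      = conv ((-(2 * (s : ℂ))) • (lamZ (-n + 2 * m) • B)) B := by
    rw [conv_smulC_right, conv_smulC_left, conv_smulLS_right, conv_smulLS_left]
  have hcomm : ∀ k, conv B (convPow ((-(2 * (s : ℂ))) • (lamZ (-n + 2 * m) • B)) k)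
      = conv (convPow ((-(2 * (s : ℂ))) • (lamZ (-n + 2 * m) • B)) k) B := by
    intro k
    induction k with
    | zero =>
      show conv B epsA = conv epsA B
      rw [conv_epsA_right, conv_epsA_left]
    | succ k ih =>
      show conv B (conv _ (convPow _ k)) = conv (conv _ (convPow _ k)) B
      rw [← conv_assoc, hBC, conv_assoc, ih, ← conv_assoc]
  have hBE : conv B (gp s) = conv (gp s) B := by
    rw [← hEgp]
    exact conv_comm_of_exp hcomm (hfact s)
  -- Step E : conclusion.
  have hfin : conv (conv B (gp s)) (charInv (gp s)) = B := by
    rw [conv_assoc, conv_charInv_right hgp, conv_epsA_right]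
  show conv (gp s) (conv B (charInv (gp s))) = B
  rw [← conv_assoc, ← hBE, hfin]

end
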